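/- The proportional-share fairness notion suffers from the incentive paradox even with additive valuations. Concretely, take 3 agents and 3 items e_1, e_2, e_3 with additive valuations v_1 = (2, 1, 0), v_2 = (0, 2, 1), v_3 = (3, 0, 2) (listing item values in order), and entitlement vectors b = (0.2, 0.4, 0.4) and b' = (0.3, 0.3, 0.4). Then b' 1-improves b; the unique allocation acceptable under Prop for b is ({e_1}, {e_2}, {e_3}), in which agent 1 receives value 2; and the allocation ({e_2}, {e_3}, {e_1}) is acceptable under Prop for b', giving agent 1 value only 1. -/

import Mathlib

namespace Stmt9

/-- A partition of the items into (possibly empty) bundles. -/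
def IsPartition {n m : ℕ} (A : Fin n → Finset (Fin m)) : Prop :=
  (∀ i j, i ≠ j → Disjoint (A i) (A j)) ∧ ∀ e, ∃ i, e ∈ A i

/-- Additive value of a bundle. -/
def bval {m : ℕ} (w : Fin m → ℝ) (S : Finset (Fin m)) : ℝ := ∑ e ∈ S, w e

/-- The additive valuations: v₁ = (2,1,0), v₂ = (0,2,1), v₃ = (3,0,2). -/
def v : Fin 3 → Fin 3 → ℝ := ![![2, 1, 0], ![0, 2, 1], ![3, 0, 2]]

/-- Entitlement vector b = (0.2, 0.4, 0.4). -/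
noncomputable def b : Fin 3 → ℝ := ![0.2, 0.4, 0.4]

/-- Entitlement vector b' = (0.3, 0.3, 0.4). -/
noncomputable def b' : Fin 3 → ℝ := ![0.3, 0.3, 0.4]

/-- Acceptable under Prop: each agent gets at least `b i · v_i(M)`. -/
noncomputable def PropAcc (β : Fin 3 → ℝ) (A : Fin 3 → Finset (Fin 3)) : Prop :=
  IsPartition A ∧ ∀ i, β i * bval (v i) Finset.univ ≤ bval (v i) (A i)

lemma mem_iff {A : Fin 3 → Finset (Fin 3)}
    (hd : ∀ i j, i ≠ j → Disjoint (A i) (A j)) {e : Fin 3} {i0 : Fin 3}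
    (h0 : e ∈ A i0) (i : Fin 3) : e ∈ A i ↔ i = i0 := by
  constructor
  · intro h
    by_contra hne
    exact Finset.disjoint_left.1 (hd i i0 hne) h h0
  · rintro rfl; exact h0


lemma sum_ifs (w : Fin 3 → ℝ) (P Q R : Prop) [Decidable P] [Decidable Q] [Decidable R] :
    bval w ((if P then {0} else ∅) ∪ (if Q then {1} else ∅) ∪ (if R then {2} else ∅)) =
      (if P then w 0 else 0) + (if Q then w 1 else 0) + (if R then w 2 else 0) := by
  simp only [bval]
  split_ifs
  · rw [show (({0} ∪ {1}) ∪ {2} : Finset (Fin 3)) = Finset.univ from by decide,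
      Fin.sum_univ_three]
  · rw [show (({0} ∪ {1}) ∪ (∅ : Finset (Fin 3))) = {0, 1} from by decide,
      Finset.sum_pair (by decide)]; ring
  · rw [show (({0} ∪ ∅) ∪ {2} : Finset (Fin 3)) = {0, 2} from by decide,
      Finset.sum_pair (by decide)]; ring
  · rw [show (({0} ∪ ∅) ∪ (∅ : Finset (Fin 3))) = {0} from by decide,
      Finset.sum_singleton]; ring
  · rw [show ((∅ ∪ {1}) ∪ {2} : Finset (Fin 3)) = {1, 2} from by decide,
      Finset.sum_pair (by decide)]; ring
  · rw [show ((∅ ∪ {1}) ∪ (∅ : Finset (Fin 3))) = {1} from by decide,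
      Finset.sum_singleton]; ring
  · rw [show (((∅ : Finset (Fin 3)) ∪ ∅) ∪ {2}) = {2} from by decide,
      Finset.sum_singleton]; ring
  · rw [show (((∅ : Finset (Fin 3)) ∪ ∅) ∪ ∅) = ∅ from by decide,
      Finset.sum_empty]; ring

/-- Prop suffers from the incentive paradox with additive
valuations: b' 1-improves b; the unique allocation acceptable under Prop for
b is ({e₁},{e₂},{e₃}) giving agent 1 value 2; and ({e₂},{e₃},{e₁}) is
acceptable under Prop for b', giving agent 1 value only 1. -/
theorem stmt_9 :
    -- b' 1-improves b
    (b 0 < b' 0 ∧ ∀ j, j ≠ 0 → b' j ≤ b j) ∧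
    -- ({e₁},{e₂},{e₃}) is acceptable for b, giving agent 1 value 2
    (PropAcc b (fun i => {i}) ∧ bval (v 0) {0} = 2) ∧
    -- and it is the unique acceptable allocation for b
    (∀ A : Fin 3 → Finset (Fin 3), PropAcc b A → ∀ i, A i = {i}) ∧
    -- ({e₂},{e₃},{e₁}) is acceptable for b', giving agent 1 value only 1
    (PropAcc b' ![{1}, {2}, {0}] ∧ bval (v 0) {1} = 1) := by
  refine ⟨⟨by norm_num [b, b'], ?_⟩, ⟨⟨⟨?_, ?_⟩, ?_⟩, ?_⟩, ?_, ⟨⟨?_, ?_⟩, ?_⟩, ?_⟩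
  · intro j hj
    fin_cases j
    · exact absurd rfl hj
    · show b' 1 ≤ b 1; norm_num [b, b']
    · show b' 2 ≤ b 2; norm_num [b, b', Matrix.cons_val_two, Matrix.tail_cons, Matrix.head_cons]
  · intro i j hij
    simp only [Finset.disjoint_singleton_left, Finset.mem_singleton]
    exact hij
  · intro e; exact ⟨e, Finset.mem_singleton_self e⟩
  · intro i; fin_cases i <;>
      norm_num [bval, b, v, Fin.sum_univ_three, Finset.sum_singleton, Matrix.cons_val_two, Matrix.tail_cons, Matrix.head_cons]
  · norm_num [bval, v, Finset.sum_singleton]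
  · intro A hA i
    obtain ⟨⟨hd, hc⟩, hv⟩ := hA
    obtain ⟨i0, h0⟩ := hc 0
    obtain ⟨i1, h1⟩ := hc 1
    obtain ⟨i2, h2⟩ := hc 2
    have key : ∀ j, A j =
        (if j = i0 then {0} else ∅) ∪ (if j = i1 then {1} else ∅) ∪
        (if j = i2 then {2} else ∅) := by
      intro j
      ext e
      fin_cases e
      · simp only [Finset.mem_union, mem_iff hd h0 j]
        split_ifs <;> simp_all [mem_iff hd h0, mem_iff hd h1, mem_iff hd h2]
      · simp only [Finset.mem_union, mem_iff hd h1 j]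
        split_ifs <;> simp_all [mem_iff hd h0, mem_iff hd h1, mem_iff hd h2]
      · simp only [Finset.mem_union, mem_iff hd h2 j]
        split_ifs <;> simp_all [mem_iff hd h0, mem_iff hd h1, mem_iff hd h2]
    have e0 := hv 0
    have e1 := hv 1
    have e2 := hv 2
    rw [key 0, sum_ifs] at e0
    rw [key 1, sum_ifs] at e1
    rw [key 2, sum_ifs] at e2
    norm_num [bval, v, b, Fin.sum_univ_three, Matrix.cons_val_two, Matrix.tail_cons, Matrix.head_cons] at e0 e1 e2
    rw [key i]
    clear key hd hc hv h0 h1 h2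
    fin_cases i0 <;> fin_cases i1 <;> fin_cases i2 <;>
      first
        | (fin_cases i <;> decide)
        | (exfalso
           simp only [show ((⟨0, by omega⟩ : Fin 3)) = 0 from rfl,
             show ((⟨1, by omega⟩ : Fin 3)) = 1 from rfl,
             show ((⟨2, by omega⟩ : Fin 3)) = 2 from rfl,
             Fin.isValue] at e0 e1 e2 ⊢ <;>
           norm_num [Fin.ext_iff] at *)
        | (fin_cases i <;> decide)
  · intro i j hij
    fin_cases i <;> fin_cases j <;> simp_all <;> decide
  · intro e; fin_cases e
    · exact ⟨2, by decide⟩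
    · exact ⟨0, by decide⟩
    · exact ⟨1, by decide⟩
  · intro i; fin_cases i <;>
      norm_num [bval, b', v, Fin.sum_univ_three, Finset.sum_singleton, Matrix.cons_val_two, Matrix.tail_cons, Matrix.head_cons]
  · norm_num [bval, v, Finset.sum_singleton]

end Stmt9
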